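/- There exist structures A ⊆ B in the vocabulary of a single equivalence relation such that A ⪯_{ω₁} B holds but A ≤_{ω₁} B fails: namely, A consists of ω₁ equivalence classes each of size ω₁, and B adds one further equivalence class of size ω₁. Player ∃ wins the game G_⪯(A,B), but Player ∀ wins G_≤(A,B) (in fact in two moves). -/

import Mathlib

open Cardinal

noncomputable section

/-- ω₁ as an ordinal: the games below have this length. -/
abbrev om1 : Ordinal.{0} := (Cardinal.aleph 1).ord

/-- The countable ordinals, a set of cardinality ω₁. -/
abbrev O1 : Type 1 := {o : Ordinal // o < om1}

/-- The model `A`: `ω₁` equivalence classes (first coordinate), each of size `ω₁`. -/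
abbrev ModA : Type 1 := O1 × O1

/-- The model `B ⊇ A`: one additional equivalence class, indexed by `none`. -/
abbrev ModB : Type 1 := Option O1 × O1

/-- The equivalence relation on `A`. -/
def EqA (x y : ModA) : Prop := x.1 = y.1

/-- The equivalence relation on `B`. -/
def EqB (x y : ModB) : Prop := x.1 = y.1

/-- The inclusion `A ⊆ B`. -/
def incl (x : ModA) : ModB := (some x.1, x.2)

/-- Domain of a set of ordered pairs. -/
def pdom {X Y : Type*} (p : Set (X × Y)) : Set X := {x | ∃ y, (x, y) ∈ p}

/-- Range of a set of ordered pairs. -/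
def pran {X Y : Type*} (p : Set (X × Y)) : Set Y := {y | ∃ x, (x, y) ∈ p}

/-- Partial isomorphism between the structures `(A, EqA)` and `(B, EqB)`. -/
def IsPIso (p : Set (ModA × ModB)) : Prop :=
  (∀ a b b', (a, b) ∈ p → (a, b') ∈ p → b = b') ∧
  (∀ a a' b, (a, b) ∈ p → (a', b) ∈ p → a = a') ∧
  (∀ a b a' b', (a, b) ∈ p → (a', b') ∈ p → (EqA a a' ↔ EqB b b'))

/-- Union of the positions of rounds `< α`. -/
def priorPos (g : Ordinal.{0} → Set (ModA × ModB)) (α : Ordinal.{0}) :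
    Set (ModA × ModB) :=
  {q | ∃ β < α, q ∈ g β}

/-- Legality of a ∀-move in `G_≤(A,B)`: an identity demand `Sum.inl a` is legal only
when `a` is in neither the domain nor the range of the position built so far. -/
def legalLe (pr : Set (ModA × ModB)) : ModA ⊕ (ModA ⊕ ModB) → Prop
  | Sum.inl a => a ∉ pdom pr ∧ incl a ∉ pran pr
  | Sum.inr _ => True

/-- The demand a ∀-move in `G_≤(A,B)` places on ∃'s next position. -/
def demandLe (mv : ModA ⊕ (ModA ⊕ ModB)) (p : Set (ModA × ModB)) : Prop :=
  match mv with
  | Sum.inl a => (a, incl a) ∈ p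
  | Sum.inr (Sum.inl a) => a ∈ pdom p
  | Sum.inr (Sum.inr b) => b ∈ pran p

/-- The demand a ∀-move places in the Ehrenfeucht–Fraïssé game `G_⪯(A,B)`. -/
def demandPrec (mv : ModA ⊕ ModB) (p : Set (ModA × ModB)) : Prop :=
  match mv with
  | Sum.inl a => a ∈ pdom p
  | Sum.inr b => b ∈ pran p

/-- Player ∃ has a winning strategy in `G_⪯(A,B)` of length ω₁: ∀ first fixes a
countable `C ⊆ A` mapped identically from the start, then the EF game of length ω₁ is
played, ∃ maintaining a countable partial isomorphism; ∃'s strategy may use only the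
moves made so far. -/
def existsWinsPrec : Prop :=
  ∃ S : Set ModA → (Ordinal.{0} → ModA ⊕ ModB) → Ordinal.{0} → Set (ModA × ModB),
    (∀ C m m' α, (∀ β ≤ α, m β = m' β) → S C m α = S C m' α) ∧
    ∀ C : Set ModA, C.Countable → ∀ (m : Ordinal.{0} → ModA ⊕ ModB),
      ∀ α < om1,
        IsPIso (S C m α) ∧ (S C m α).Countable ∧
        (∀ a ∈ C, (a, incl a) ∈ S C m α) ∧
        (∀ β < α, S C m β ⊆ S C m α) ∧ demandPrec (m α) (S C m α)

/-- Player ∀ has a winning strategy in `G_≤(A,B)` of length ω₁: a strategy producing,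
from the positions played by ∃ at earlier rounds, a move at each round, such that along
every play there is a round `α < ω₁` at which all of ∀'s moves so far were legal but
∃'s position fails to be a good response (a countable partial isomorphism extending the
earlier positions and fulfilling the demand). -/
def forallWinsLe : Prop :=
  ∃ SA : (Ordinal.{0} → Set (ModA × ModB)) → Ordinal.{0} → (ModA ⊕ (ModA ⊕ ModB)),
    (∀ p p' α, (∀ β < α, p β = p' β) → SA p α = SA p' α) ∧
    ∀ p : Ordinal.{0} → Set (ModA × ModB), ∃ α < om1,
      (∀ β ≤ α, legalLe (priorPos p β) (SA p β)) ∧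
      ¬(IsPIso (p α) ∧ (p α).Countable ∧ (∀ β < α, p β ⊆ p α) ∧
          demandLe (SA p α) (p α))

/-! ### Auxiliary lemmas -/

lemma mk_O1 : #O1 = Cardinal.lift.{1} (Cardinal.aleph.{0} 1) := by
  have := Ordinal.mk_Iio_ordinal om1
  simp only [Cardinal.card_ord] at this
  exact this

lemma aleph0_lt_mk_O1 : (ℵ₀ : Cardinal.{1}) < #O1 := by
  rw [mk_O1]
  have h : (ℵ₀ : Cardinal.{1}) = Cardinal.lift.{1} (ℵ₀ : Cardinal.{0}) := by simp
  rw [h, Cardinal.lift_lt]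
  exact aleph0_lt_aleph_one

instance : Infinite O1 := by
  rw [Cardinal.infinite_iff]; exact le_of_lt aleph0_lt_mk_O1

instance : Uncountable O1 := by
  rw [← Cardinal.aleph0_lt_mk_iff]; exact aleph0_lt_mk_O1

lemma exists_fresh {s : Set O1} (hs : s.Countable) : ∃ y : O1, y ∉ s := by
  by_contra h
  push_neg at h
  have : s = Set.univ := Set.eq_univ_of_forall h
  exact Set.not_countable_univ (this ▸ hs)

lemma exists_G (D : Set O1) (hD : D.Countable) :
    ∃ G : O1 ≃ Option O1, ∀ i ∈ D, G i = some i := by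
  have hDm : #↥D ≤ ℵ₀ := Cardinal.le_aleph0_iff_set_countable.mpr hD
  have h1 : #↥Dᶜ = #O1 :=
    Cardinal.mk_compl_of_infinite D (lt_of_le_of_lt hDm aleph0_lt_mk_O1)
  have himg : #↥(some '' D : Set (Option O1)) ≤ ℵ₀ :=
    Cardinal.le_aleph0_iff_set_countable.mpr (hD.image _)
  have hopt : #(Option O1) = #O1 := by
    rw [Cardinal.mk_option, Cardinal.add_one_eq (le_of_lt aleph0_lt_mk_O1)]
  have h2 : #↥(some '' D : Set (Option O1))ᶜ = #(Option O1) :=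
    Cardinal.mk_compl_of_infinite _ (lt_of_le_of_lt himg (hopt ▸ aleph0_lt_mk_O1))
  have heq : #↥Dᶜ = #↥(some '' D : Set (Option O1))ᶜ := by
    rw [h1, h2, hopt]
  classical
  obtain ⟨e⟩ := Cardinal.eq.mp heq
  refine ⟨(Equiv.Set.sumCompl D).symm.trans
    ((Equiv.sumCongr (Equiv.Set.image some D (Option.some_injective _)) e).trans
      (Equiv.Set.sumCompl (some '' D))), ?_⟩
  intro i hi
  simp only [Equiv.trans_apply, Equiv.Set.sumCompl_symm_apply_of_mem hi,
    Equiv.sumCongr_apply, Sum.map_inl]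
  simp [Equiv.Set.image, Equiv.Set.imageOfInjOn]

lemma om1_isLimit : Order.IsSuccLimit om1 :=
  Cardinal.isSuccLimit_ord (by simp [Cardinal.aleph0_le_aleph])

lemma zero_lt_om1 : (0 : Ordinal.{0}) < om1 := om1_isLimit.pos

lemma one_lt_om1 : (1 : Ordinal.{0}) < om1 := by
  have := om1_isLimit.succ_lt zero_lt_om1
  simpa using this

lemma countable_Iic {α : Ordinal.{0}} (h : α < om1) : (Set.Iic α).Countable := by
  rw [← Cardinal.le_aleph0_iff_set_countable]
  have h2 : Set.Iic α = Set.Iio (α + 1) := by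
    ext x; simp [Order.lt_succ_iff]
  rw [h2, Ordinal.mk_Iio_ordinal]
  have hc : (α + 1).card ≤ ℵ₀ := by
    have h3 : α + 1 < om1 := om1_isLimit.succ_lt h
    rw [Cardinal.lt_ord] at h3
    rw [← Cardinal.succ_aleph0] at h3
    exact Order.le_of_lt_succ h3
  calc Cardinal.lift.{1} (α+1).card ≤ Cardinal.lift.{1} ℵ₀ := Cardinal.lift_le.2 hc
    _ = ℵ₀ := by simp

/-! ### ∃'s strategy in `G_⪯` -/

/-- The canonical pair assigned to `a` by the class bijection `G`. -/
def idmap (G : O1 ≃ Option O1) (a : ModA) : ModA × ModB := (a, (G a.1, a.2))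

/-- The element of `A` that a move forces into the domain of the position. -/
def TT (G : O1 ≃ Option O1) : (ModA ⊕ ModB) → Set ModA
  | Sum.inl a => {a}
  | Sum.inr b => {(G.symm b.1, b.2)}

lemma TT_countable (G : O1 ≃ Option O1) (mv : ModA ⊕ ModB) : (TT G mv).Countable := by
  cases mv <;> exact Set.countable_singleton _

lemma isPIso_idmap (G : O1 ≃ Option O1) (X : Set ModA) : IsPIso (idmap G '' X) := by
  have hmem : ∀ {a : ModA} {b : ModB}, (a, b) ∈ idmap G '' X → b = (G a.1, a.2) := by
    rintro a b ⟨x, _, hx⟩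
    rw [idmap, Prod.mk.injEq] at hx
    rw [← hx.1]; exact hx.2.symm
  refine ⟨?_, ?_, ?_⟩
  · intro a b b' h h'
    rw [hmem h, hmem h']
  · intro a a' b h h'
    have h1 := hmem h
    have h2 := hmem h'
    rw [h1, Prod.mk.injEq] at h2
    exact Prod.ext (G.injective h2.1) h2.2
  · intro a b a' b' h h'
    rw [hmem h, hmem h']
    unfold EqA EqB
    simp only
    constructor
    · intro he; rw [he]
    · intro he; exact G.injective he

open Classical in
/-- The class bijection used by ∃, fixing the classes met by `C`. -/
def GC (C : Set ModA) : O1 ≃ Option O1 :=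
  if h : (Prod.fst '' C).Countable then (exists_G _ h).choose
  else (exists_G ∅ Set.countable_empty).choose

lemma GC_spec {C : Set ModA} (hC : C.Countable) : ∀ a ∈ C, GC C a.1 = some a.1 := by
  intro a ha
  rw [GC, dif_pos (hC.image _)]
  exact (exists_G _ (hC.image Prod.fst)).choose_spec a.1 ⟨a, ha, rfl⟩

/-- ∃'s strategy in `G_⪯(A,B)`. -/
def SE (C : Set ModA) (m : Ordinal.{0} → ModA ⊕ ModB) (α : Ordinal.{0}) :
    Set (ModA × ModB) :=
  idmap (GC C) '' (C ∪ ⋃ β ∈ Set.Iic α, TT (GC C) (m β))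

lemma existsWinsPrec_holds : existsWinsPrec := by
  refine ⟨SE, ?_, ?_⟩
  · intro C m m' α h
    unfold SE
    have : (⋃ β ∈ Set.Iic α, TT (GC C) (m β)) = ⋃ β ∈ Set.Iic α, TT (GC C) (m' β) := by
      exact Set.iUnion₂_congr fun β hβ => by rw [h β hβ]
    rw [this]
  · intro C hC m α hα
    set G := GC C with hGdef
    refine ⟨isPIso_idmap G _, ?_, ?_, ?_, ?_⟩
    · apply Set.Countable.image
      exact hC.union ((countable_Iic hα).biUnion fun β _ => TT_countable G (m β))
    · intro a ha
      have h2 : idmap G a = (a, incl a) := by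
        rw [idmap, incl, GC_spec hC a ha]
      exact ⟨a, Or.inl ha, h2⟩
    · intro β hβ
      apply Set.image_mono
      apply Set.union_subset_union_right
      apply Set.biUnion_subset_biUnion_left
      intro γ hγ
      exact le_trans hγ (le_of_lt hβ)
    · rcases hm : m α with a | b
      · refine ⟨(G a.1, a.2), a, Or.inr ?_, rfl⟩
        exact Set.mem_biUnion (Set.mem_Iic.mpr le_rfl) (by rw [hm]; exact rfl)
      · refine ⟨(G.symm b.1, b.2), (G.symm b.1, b.2), Or.inr ?_, ?_⟩
        · exact Set.mem_biUnion (Set.mem_Iic.mpr le_rfl) (by rw [hm]; exact rfl)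
        · rw [idmap]
          simp [hGdef]

/-! ### ∀'s strategy in `G_≤` -/

/-- A fixed element of `O1`. -/
def y0 : O1 := ⟨0, zero_lt_om1⟩

/-- The element of the new class of `B` that ∀ plays first. -/
def b0 : ModB := (none, y0)

open Classical in
/-- ∀'s move at round 1, depending on ∃'s position `q` at round 0: a fresh element of
`A` equivalent to the preimage of `b0`, demanded to be mapped identically. -/
def freshMove (q : Set (ModA × ModB)) : ModA ⊕ (ModA ⊕ ModB) :=
  if h : ∃ a : ModA, (a, b0) ∈ q then
    if h2 : ∃ y : O1, (h.choose.1, y) ∉ pdom q ∧ incl (h.choose.1, y) ∉ pran q then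
      Sum.inl (h.choose.1, h2.choose)
    else Sum.inr (Sum.inl (y0, y0))
  else Sum.inr (Sum.inl (y0, y0))

/-- ∀'s strategy in `G_≤(A,B)`. -/
def SAdef (p : Ordinal.{0} → Set (ModA × ModB)) (α : Ordinal.{0}) :
    ModA ⊕ (ModA ⊕ ModB) :=
  if α = 0 then Sum.inr (Sum.inr b0)
  else if α = 1 then freshMove (p 0)
  else Sum.inr (Sum.inl (y0, y0))

lemma priorPos_one (p : Ordinal.{0} → Set (ModA × ModB)) : priorPos p 1 = p 0 := by
  ext x
  constructor
  · rintro ⟨β, hβ, hx⟩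
    rwa [Ordinal.lt_one_iff_zero.mp hβ] at hx
  · intro hx
    exact ⟨0, zero_lt_one, hx⟩

lemma forallWinsLe_holds : forallWinsLe := by
  refine ⟨SAdef, ?_, ?_⟩
  · intro p p' α h
    unfold SAdef
    by_cases h0 : α = 0
    · simp [h0]
    · by_cases h1 : α = 1
      · rw [if_neg h0, if_neg h0, if_pos h1, if_pos h1, h 0 (h1 ▸ zero_lt_one)]
      · simp [h0, h1]
  · intro p
    by_cases hgood : IsPIso (p 0) ∧ (p 0).Countable ∧ b0 ∈ pran (p 0)
    · -- ∀ wins at round 1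
      obtain ⟨hiso0, hcnt0, hb0⟩ := hgood
      have hex : ∃ a : ModA, (a, b0) ∈ p 0 := hb0
      set a := hex.choose with ha_def
      have ha : (a, b0) ∈ p 0 := hex.choose_spec
      have hfr : ∃ y : O1, (a.1, y) ∉ pdom (p 0) ∧ incl (a.1, y) ∉ pran (p 0) := by
        have hpd : pdom (p 0) = Prod.fst '' (p 0) := by
          ext x; constructor
          · rintro ⟨b, hb⟩; exact ⟨(x, b), hb, rfl⟩
          · rintro ⟨⟨x', b⟩, hb, rfl⟩; exact ⟨b, hb⟩
        have hpr : pran (p 0) = Prod.snd '' (p 0) := by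
          ext x; constructor
          · rintro ⟨b, hb⟩; exact ⟨(b, x), hb, rfl⟩
          · rintro ⟨⟨x', b⟩, hb, rfl⟩; exact ⟨x', hb⟩
        have hpdc : (pdom (p 0)).Countable := hpd ▸ hcnt0.image Prod.fst
        have hprc : (pran (p 0)).Countable := hpr ▸ hcnt0.image Prod.snd
        have hd : ((fun y : O1 => ((a.1, y) : ModA)) ⁻¹' pdom (p 0)).Countable :=
          hpdc.preimage (fun y y' hyy => by simpa using hyy)
        have hr : ((fun y : O1 => incl (a.1, y)) ⁻¹' pran (p 0)).Countable :=
          hprc.preimage (fun y y' hyy => by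
            simp only [incl, Prod.mk.injEq] at hyy
            exact hyy.2)
        obtain ⟨y, hy⟩ := exists_fresh (hd.union hr)
        simp only [Set.mem_union, Set.mem_preimage] at hy
        push_neg at hy
        exact ⟨y, hy.1, hy.2⟩
      have hSA1 : SAdef p 1 = Sum.inl (a.1, hfr.choose) := by
        rw [SAdef, if_neg one_ne_zero, if_pos rfl, freshMove, dif_pos hex, dif_pos hfr]
      refine ⟨1, one_lt_om1, ?_, ?_⟩
      · intro β hβ
        rcases Ordinal.le_one_iff.mp hβ with h0 | h1
        · rw [SAdef, if_pos h0]
          trivial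
        · rw [h1, hSA1, priorPos_one]
          exact hfr.choose_spec
      · rintro ⟨hiso, _, hext, hdem⟩
        rw [hSA1] at hdem
        have hmem : ((a.1, hfr.choose), incl (a.1, hfr.choose)) ∈ p 1 := hdem
        have ha1 : (a, b0) ∈ p 1 := hext 0 zero_lt_one ha
        have := hiso.2.2 a b0 (a.1, hfr.choose) (incl (a.1, hfr.choose)) ha1 hmem
        rw [EqA, EqB] at this
        have hcontr : (b0.1 : Option O1) = some a.1 := this.mp rfl
        simp [b0] at hcontr
    · -- ∀ wins already at round 0
      refine ⟨0, zero_lt_om1, ?_, ?_⟩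
      · intro β hβ
        rw [nonpos_iff_eq_zero.mp hβ, SAdef, if_pos rfl]
        trivial
      · rintro ⟨h1, h2, _, h4⟩
        have hSA0 : SAdef p 0 = Sum.inr (Sum.inr b0) := by rw [SAdef, if_pos rfl]
        rw [hSA0] at h4
        exact hgood ⟨h1, h2, h4⟩

/-- There are structures `A ⊆ B` in the vocabulary of one equivalence relation — `A`
consisting of ω₁ classes of size ω₁ and `B` having one further class of size ω₁ — such
that ∃ wins the game `G_⪯(A,B)` but ∀ wins the game `G_≤(A,B)`. -/
theorem prec_not_le : existsWinsPrec ∧ forallWinsLe :=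
  ⟨existsWinsPrec_holds, forallWinsLe_holds⟩

end
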